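/- Two-sided fidelity characterization of the sample complexity of symmetric binary quantum hypothesis testing: Let ρ, σ be quantum states on ℂ^d with ρ ≠ σ and ρσ ≠ 0, let p ∈ (0,1), q := 1 − p, and let ε ∈ (0, min{p,q}). Then ln(pq/ε)/(−ln F_H(ρ,σ)) ≤ n*(p,ρ,q,σ,ε) ≤ ⌈ ln(√(pq)/ε) / (−(1/2)·ln F_H(ρ,σ)) ⌉, and likewise ln(pq/ε)/(−ln F(ρ,σ)) ≤ n*(p,ρ,q,σ,ε) ≤ ⌈ ln(√(pq)/ε) / (−(1/2)·ln F(ρ,σ)) ⌉. -/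

import Mathlib

open scoped ComplexOrder Classical

noncomputable section

namespace QHT

variable {ι : Type*} [Fintype ι] [DecidableEq ι]

/-- Trace norm of a complex matrix: `Tr[√(Aᴴ A)]`. -/
def traceNorm (A : Matrix ι ι ℂ) : ℝ :=
  (((Matrix.posSemidef_conjTranspose_mul_self A).1.eigenvectorUnitary : Matrix ι ι ℂ) *
    Matrix.diagonal ((fun x : ℝ => (x : ℂ)) ∘ (Real.sqrt ·) ∘ (Matrix.posSemidef_conjTranspose_mul_self A).1.eigenvalues) *
    (star (Matrix.posSemidef_conjTranspose_mul_self A).1.eigenvectorUnitary : Matrix ι ι ℂ)).trace.re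

/-- A quantum state: positive semidefinite with unit trace. -/
def IsState (ρ : Matrix ι ι ℂ) : Prop := ρ.PosSemidef ∧ ρ.trace = 1

/-- Positive semidefinite square root (junk value `0` off the PSD matrices). -/
def matSqrt (A : Matrix ι ι ℂ) : Matrix ι ι ℂ :=
  if h : A.PosSemidef then
    (h.1.eigenvectorUnitary : Matrix ι ι ℂ) *
      Matrix.diagonal ((fun x : ℝ => (x : ℂ)) ∘ (Real.sqrt ·) ∘ h.1.eigenvalues) *
      (star h.1.eigenvectorUnitary : Matrix ι ι ℂ)
  else 0

/-- Real power of a Hermitian matrix, applying `x ↦ x ^ s` to positive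
eigenvalues and `x ↦ 0` to the remaining ones (so `A ^ 0` is the support
projection); junk value `0` off the Hermitian matrices. -/
def matRpow (A : Matrix ι ι ℂ) (s : ℝ) : Matrix ι ι ℂ :=
  if h : A.IsHermitian then
    (h.eigenvectorUnitary : Matrix ι ι ℂ) *
      Matrix.diagonal (fun i =>
        ((if 0 < h.eigenvalues i then (h.eigenvalues i) ^ s else 0 : ℝ) : ℂ)) *
      (star (h.eigenvectorUnitary : Matrix ι ι ℂ))
  else 0

/-- Fidelity `F(ρ,σ) = ‖√ρ √σ‖₁²`. -/
def Fid (ρ σ : Matrix ι ι ℂ) : ℝ := (traceNorm (matSqrt ρ * matSqrt σ)) ^ 2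

/-- Holevo fidelity `F_H(ρ,σ) = (Tr[√ρ √σ])²`. -/
def FidH (ρ σ : Matrix ι ι ℂ) : ℝ := (((matSqrt ρ * matSqrt σ).trace).re) ^ 2

/-- `Q_s(A‖B) = Tr[A^s B^{1-s}]`. -/
def Qs (s : ℝ) (A B : Matrix ι ι ℂ) : ℝ := ((matRpow A s * matRpow B (1 - s)).trace).re

/-- `Q_min(A‖B) = min_{s ∈ [0,1]} Q_s(A‖B)`. -/
def Qmin (A B : Matrix ι ι ℂ) : ℝ :=
  sInf { x : ℝ | ∃ s ∈ Set.Icc (0 : ℝ) 1, x = Qs s A B }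

/-- Bures distance. -/
def dB (ρ σ : Matrix ι ι ℂ) : ℝ := Real.sqrt (2 * (1 - Real.sqrt (Fid ρ σ)))

/-- Quantum Hellinger distance. -/
def dH (ρ σ : Matrix ι ι ℂ) : ℝ := Real.sqrt (2 * (1 - Real.sqrt (FidH ρ σ)))

/-- `n`-fold Kronecker (tensor) power of a matrix. -/
def tensorPow {d : ℕ} (A : Matrix (Fin d) (Fin d) ℂ) (n : ℕ) :
    Matrix (Fin n → Fin d) (Fin n → Fin d) ℂ :=
  Matrix.of fun i j => ∏ k, A (i k) (j k)

/-- Optimal error probability of symmetric binary quantum hypothesis testing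
with `n` copies. -/
def pErr {d : ℕ} (p : ℝ) (ρ : Matrix (Fin d) (Fin d) ℂ) (q : ℝ)
    (σ : Matrix (Fin d) (Fin d) ℂ) (n : ℕ) : ℝ :=
  sInf { x : ℝ | ∃ Λ : Matrix (Fin n → Fin d) (Fin n → Fin d) ℂ,
    Λ.PosSemidef ∧ (1 - Λ).PosSemidef ∧
    x = p * (((1 - Λ) * tensorPow ρ n).trace).re + q * ((Λ * tensorPow σ n).trace).re }

/-- Sample complexity of symmetric binary quantum hypothesis testing. -/
def sampleComplexity {d : ℕ} (p : ℝ) (ρ : Matrix (Fin d) (Fin d) ℂ) (q : ℝ)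
    (σ : Matrix (Fin d) (Fin d) ℂ) (ε : ℝ) : ℕ :=
  sInf { n : ℕ | 1 ≤ n ∧ pErr p ρ q σ n ≤ ε }

/-- Optimal type II error `β_ε(ρ‖σ)` of asymmetric hypothesis testing. -/
def betaErr (ε : ℝ) (ρ σ : Matrix ι ι ℂ) : ℝ :=
  sInf { x : ℝ | ∃ Λ : Matrix ι ι ℂ, Λ.PosSemidef ∧ (1 - Λ).PosSemidef ∧
    (((1 - Λ) * ρ).trace).re ≤ ε ∧ x = ((Λ * σ).trace).re }

/-- Sample complexity of asymmetric binary quantum hypothesis testing. -/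
def sampleComplexityAsym {d : ℕ} (ρ σ : Matrix (Fin d) (Fin d) ℂ) (ε δ : ℝ) : ℕ :=
  sInf { n : ℕ | 1 ≤ n ∧ betaErr ε (tensorPow ρ n) (tensorPow σ n) ≤ δ }

/-- Petz–Rényi divergence `D_α(ρ‖σ)`. -/
def petzRenyi (α : ℝ) (ρ σ : Matrix ι ι ℂ) : ℝ :=
  (1 / (α - 1)) * Real.log (((matRpow ρ α * matRpow σ (1 - α)).trace).re)

/-- Sandwiched Rényi divergence `D̃_α(ρ‖σ)`. -/
def sandwichedRenyi (α : ℝ) (ρ σ : Matrix ι ι ℂ) : ℝ :=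
  (1 / (α - 1)) * Real.log
    (((matRpow (matRpow σ ((1 - α) / (2 * α)) * ρ * matRpow σ ((1 - α) / (2 * α))) α).trace).re)


set_option linter.unusedSectionVars false
set_option maxHeartbeats 1000000

/-- Positive semidefinite square root via the spectral decomposition. -/
def _root_.Matrix.PosSemidef.sqrt {A : Matrix ι ι ℂ} (h : A.PosSemidef) : Matrix ι ι ℂ :=
  (h.1.eigenvectorUnitary : Matrix ι ι ℂ) *
    Matrix.diagonal ((fun x : ℝ => (x : ℂ)) ∘ (Real.sqrt ·) ∘ h.1.eigenvalues) *
    (star h.1.eigenvectorUnitary : Matrix ι ι ℂ)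

open scoped MatrixOrder in
lemma _root_.Matrix.PosSemidef.sqrt_eq_cfc {A : Matrix ι ι ℂ} (h : A.PosSemidef) :
    h.sqrt = CFC.sqrt A := by
  rw [CFC.sqrt_eq_cfc, cfc_nnreal_eq_real _ A, h.1.cfc_eq]
  simp only [Matrix.IsHermitian.cfc, Matrix.PosSemidef.sqrt, Unitary.conjStarAlgAut_apply,
    Real.coe_sqrt, Real.coe_toNNReal']
  congr 3
  funext i
  simp [Real.sqrt_eq_zero', max_eq_left (h.eigenvalues_nonneg i)]

open scoped MatrixOrder in
lemma _root_.Matrix.PosSemidef.posSemidef_sqrt {A : Matrix ι ι ℂ} (h : A.PosSemidef) :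
    h.sqrt.PosSemidef := by
  rw [h.sqrt_eq_cfc]; exact Matrix.nonneg_iff_posSemidef.mp (CFC.sqrt_nonneg A)

open scoped MatrixOrder in
lemma _root_.Matrix.PosSemidef.sqrt_mul_self {A : Matrix ι ι ℂ} (h : A.PosSemidef) :
    h.sqrt * h.sqrt = A := by
  rw [h.sqrt_eq_cfc]; exact CFC.sqrt_mul_sqrt_self A h.nonneg

open scoped MatrixOrder in
lemma _root_.Matrix.PosSemidef.eq_sqrt_of_sq_eq {A : Matrix ι ι ℂ} (hA : A.PosSemidef)
    {B : Matrix ι ι ℂ} (hB : B.PosSemidef) (hAB : A ^ 2 = B) : A = hB.sqrt := by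
  rw [hB.sqrt_eq_cfc]
  exact (CFC.sqrt_unique (by rw [← pow_two, hAB]) hA.nonneg).symm

lemma _root_.Matrix.IsHermitian.star_mul_self_mul_eq_diagonal {A : Matrix ι ι ℂ}
    (hA : A.IsHermitian) :
    star (hA.eigenvectorUnitary : Matrix ι ι ℂ) * A * (hA.eigenvectorUnitary : Matrix ι ι ℂ)
      = Matrix.diagonal (RCLike.ofReal ∘ hA.eigenvalues) := by
  have h := hA.spectral_theorem
  rw [Unitary.conjStarAlgAut_apply] at h
  have hU : star (hA.eigenvectorUnitary : Matrix ι ι ℂ) * (hA.eigenvectorUnitary : Matrix ι ι ℂ)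
      = 1 := Matrix.mem_unitaryGroup_iff'.mp hA.eigenvectorUnitary.2
  refine (congrArg (fun X => star (hA.eigenvectorUnitary : Matrix ι ι ℂ) * X *
    (hA.eigenvectorUnitary : Matrix ι ι ℂ)) h).trans ?_
  simp only [Matrix.mul_assoc, hU, Matrix.mul_one]
  rw [← Matrix.mul_assoc, hU, Matrix.one_mul]

lemma traceNorm_eq_sqrt' (A : Matrix ι ι ℂ) :
    traceNorm A = ((Matrix.posSemidef_conjTranspose_mul_self A).sqrt.trace).re := rfl

open Matrix

def matFun {A : Matrix ι ι ℂ} (hA : A.IsHermitian) (f : ℝ → ℝ) : Matrix ι ι ℂ :=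
  (hA.eigenvectorUnitary : Matrix ι ι ℂ) *
    Matrix.diagonal (fun i => (f (hA.eigenvalues i) : ℂ)) *
    (star (hA.eigenvectorUnitary : Matrix ι ι ℂ))

lemma star_mul_selfU {A : Matrix ι ι ℂ} (hA : A.IsHermitian) :
    (star (hA.eigenvectorUnitary : Matrix ι ι ℂ)) * (hA.eigenvectorUnitary : Matrix ι ι ℂ) = 1 :=
  Matrix.mem_unitaryGroup_iff'.mp hA.eigenvectorUnitary.2

lemma mul_self_starU {A : Matrix ι ι ℂ} (hA : A.IsHermitian) :
    (hA.eigenvectorUnitary : Matrix ι ι ℂ) * (star (hA.eigenvectorUnitary : Matrix ι ι ℂ)) = 1 :=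
  Matrix.mem_unitaryGroup_iff.mp hA.eigenvectorUnitary.2

lemma matFun_mul_matFun {A : Matrix ι ι ℂ} (hA : A.IsHermitian) (f g : ℝ → ℝ) :
    matFun hA f * matFun hA g = matFun hA (fun x => f x * g x) := by
  unfold matFun
  have h : ∀ X : Matrix ι ι ℂ, (star (hA.eigenvectorUnitary : Matrix ι ι ℂ)) *
      ((hA.eigenvectorUnitary : Matrix ι ι ℂ) * X) = X := fun X => by
    rw [← Matrix.mul_assoc, star_mul_selfU, Matrix.one_mul]
  simp only [Matrix.mul_assoc, h]
  rw [← Matrix.mul_assoc (Matrix.diagonal _) (Matrix.diagonal _),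
    Matrix.diagonal_mul_diagonal]
  push_cast
  rfl

lemma matFun_id {A : Matrix ι ι ℂ} (hA : A.IsHermitian) :
    matFun hA (fun x => x) = A := by
  conv_rhs => rw [hA.spectral_theorem]
  rfl

lemma matFun_congr {A : Matrix ι ι ℂ} (hA : A.IsHermitian) {f g : ℝ → ℝ}
    (h : ∀ i, f (hA.eigenvalues i) = g (hA.eigenvalues i)) :
    matFun hA f = matFun hA g := by
  unfold matFun
  congr 2
  exact congrArg _ (funext fun i => by rw [h i])

lemma matFun_isHermitian {A : Matrix ι ι ℂ} (hA : A.IsHermitian) (f : ℝ → ℝ) :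
    (matFun hA f).IsHermitian := by
  unfold matFun Matrix.IsHermitian
  rw [Matrix.conjTranspose_mul, Matrix.conjTranspose_mul, Matrix.star_eq_conjTranspose,
    Matrix.conjTranspose_conjTranspose, Matrix.diagonal_conjTranspose, Matrix.mul_assoc]
  congr 2
  ext i
  simp [Pi.star_def, Complex.conj_ofReal]

lemma matFun_posSemidef {A : Matrix ι ι ℂ} (hA : A.IsHermitian) {f : ℝ → ℝ}
    (hf : ∀ i, 0 ≤ f (hA.eigenvalues i)) : (matFun hA f).PosSemidef := by
  unfold matFun
  rw [Matrix.star_eq_conjTranspose]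
  exact Matrix.PosSemidef.mul_mul_conjTranspose_same
    (Matrix.PosSemidef.diagonal fun i => by
      simpa using Complex.zero_le_real.mpr (hf i)) _

lemma trace_diagonal_mul (d : ι → ℂ) (Y : Matrix ι ι ℂ) :
    (Matrix.diagonal d * Y).trace = ∑ i, d i * Y i i := by
  simp [Matrix.trace, Matrix.diag, Matrix.diagonal_mul]

lemma trace_matFun_mul {A : Matrix ι ι ℂ} (hA : A.IsHermitian) (f : ℝ → ℝ) (X : Matrix ι ι ℂ) :
    (matFun hA f * X).trace
      = ∑ i, (f (hA.eigenvalues i) : ℂ) *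
          ((star (hA.eigenvectorUnitary : Matrix ι ι ℂ) * X *
            (hA.eigenvectorUnitary : Matrix ι ι ℂ)) i i) := by
  unfold matFun
  rw [Matrix.mul_assoc, Matrix.mul_assoc, Matrix.trace_mul_comm]
  simp only [Matrix.mul_assoc]
  rw [trace_diagonal_mul]

lemma trace_matFun {A : Matrix ι ι ℂ} (hA : A.IsHermitian) (f : ℝ → ℝ) :
    (matFun hA f).trace = ∑ i, (f (hA.eigenvalues i) : ℂ) := by
  unfold matFun
  rw [Matrix.mul_assoc, Matrix.trace_mul_comm, Matrix.mul_assoc, star_mul_selfU hA,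
    Matrix.mul_one, Matrix.trace_diagonal]

lemma entry_eq_dot (U X : Matrix ι ι ℂ) (i : ι) :
    (star U * X * U) i i = dotProduct (star (fun a => U a i)) (X *ᵥ (fun a => U a i)) := by
  simp [Matrix.mul_apply, dotProduct, Matrix.mulVec, Finset.mul_sum, Finset.sum_mul,
    Matrix.conjTranspose_apply, mul_assoc]
  rw [Finset.sum_comm]

lemma psd_entry_nonneg {X : Matrix ι ι ℂ} (hX : X.PosSemidef) (U : Matrix ι ι ℂ) (i : ι) :
    0 ≤ (star U * X * U) i i := by
  rw [entry_eq_dot]; exact hX.dotProduct_mulVec_nonneg _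

lemma psd_diag_nonneg {X : Matrix ι ι ℂ} (hX : X.PosSemidef) (i : ι) :
    0 ≤ X i i := by
  have := hX.dotProduct_mulVec_nonneg (Pi.single i 1)
  simpa [dotProduct, Matrix.mulVec, Pi.single_apply] using this

lemma psd_trace_nonneg {X : Matrix ι ι ℂ} (hX : X.PosSemidef) : 0 ≤ X.trace := by
  exact Finset.sum_nonneg fun i _ => psd_diag_nonneg hX i

lemma complex_nonneg_re {z : ℂ} (h : 0 ≤ z) : 0 ≤ z.re := by
  rw [Complex.le_def] at h; simpa using h.1

lemma complex_nonneg_eq_re {z : ℂ} (h : 0 ≤ z) : z = (z.re : ℂ) := by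
  rw [Complex.le_def] at h
  exact Complex.ext rfl (by simpa using h.2.symm)

lemma psd_trace_re_nonneg {X : Matrix ι ι ℂ} (hX : X.PosSemidef) : 0 ≤ X.trace.re :=
  complex_nonneg_re (psd_trace_nonneg hX)

lemma psd_mul_psd_trace_nonneg {A B : Matrix ι ι ℂ} (hA : A.PosSemidef) (hB : B.PosSemidef) :
    0 ≤ ((A * B).trace) := by
  have h1 : A * B = hA.sqrt * (hA.sqrt * B) := by
    rw [← Matrix.mul_assoc, hA.sqrt_mul_self]
  rw [h1, Matrix.trace_mul_comm, Matrix.mul_assoc]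
  have h2 : (hA.sqrt * B * hA.sqrt).PosSemidef := by
    have := hB.conjTranspose_mul_mul_same (B := hA.sqrt)
    rwa [hA.posSemidef_sqrt.1] at this
  rw [← Matrix.mul_assoc]
  exact psd_trace_nonneg h2

lemma psd_mul_psd_trace_re_nonneg {A B : Matrix ι ι ℂ} (hA : A.PosSemidef) (hB : B.PosSemidef) :
    0 ≤ ((A * B).trace).re := complex_nonneg_re (psd_mul_psd_trace_nonneg hA hB)

lemma matSqrt_eq {A : Matrix ι ι ℂ} (hA : A.PosSemidef) : matSqrt A = hA.sqrt := dif_pos hA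


lemma matFun_eq_sqrt {A : Matrix ι ι ℂ} (hA : A.PosSemidef) :
    matFun hA.1 Real.sqrt = hA.sqrt := by
  refine Matrix.PosSemidef.eq_sqrt_of_sq_eq ?_ hA ?_
  · exact matFun_posSemidef hA.1 fun i => Real.sqrt_nonneg _
  · rw [pow_two, matFun_mul_matFun,
      matFun_congr hA.1 (g := fun x => x)
        (fun i => Real.mul_self_sqrt (hA.eigenvalues_nonneg i)), matFun_id]

lemma matSqrt_eq_matFun {A : Matrix ι ι ℂ} (hA : A.PosSemidef) :
    matSqrt A = matFun hA.1 Real.sqrt := by rw [matSqrt_eq hA, matFun_eq_sqrt]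

lemma matSqrt_posSemidef {A : Matrix ι ι ℂ} (hA : A.PosSemidef) :
    (matSqrt A).PosSemidef := by rw [matSqrt_eq hA]; exact hA.posSemidef_sqrt

lemma matSqrt_hermitian {A : Matrix ι ι ℂ} (hA : A.PosSemidef) :
    (matSqrt A).IsHermitian := (matSqrt_posSemidef hA).1

lemma matSqrt_mul_self {A : Matrix ι ι ℂ} (hA : A.PosSemidef) :
    matSqrt A * matSqrt A = A := by rw [matSqrt_eq hA]; exact hA.sqrt_mul_self

/-- traceNorm of a Hermitian matrix is the sum of the absolute values of eigenvalues -/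
lemma traceNorm_hermitian {A : Matrix ι ι ℂ} (hA : A.IsHermitian) :
    traceNorm A = ∑ i, |hA.eigenvalues i| := by
  have habs : (Matrix.posSemidef_conjTranspose_mul_self A).sqrt
      = matFun hA (fun x => |x|) := by
    refine (Matrix.PosSemidef.eq_sqrt_of_sq_eq
      (matFun_posSemidef hA fun i => abs_nonneg _) _ ?_).symm
    rw [pow_two, matFun_mul_matFun,
      matFun_congr hA (g := fun x => x * x) (fun i => abs_mul_abs_self _), ← matFun_mul_matFun,
      matFun_id, hA]
  rw [traceNorm_eq_sqrt', habs, trace_matFun]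
  rw [Complex.re_sum]
  simp

/-- traceNorm of a general matrix: sum of square roots of eigenvalues of `Aᴴ A`. -/
lemma traceNorm_eq_sum_sqrt (M : Matrix ι ι ℂ) :
    traceNorm M = ∑ i, Real.sqrt ((Matrix.posSemidef_conjTranspose_mul_self M).1.eigenvalues i)
    := by
  rw [traceNorm_eq_sqrt', ← matFun_eq_sqrt (Matrix.posSemidef_conjTranspose_mul_self M), trace_matFun]
  rw [Complex.re_sum]
  simp

lemma traceNorm_nonneg (M : Matrix ι ι ℂ) : 0 ≤ traceNorm M := by
  rw [traceNorm_eq_sum_sqrt]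
  exact Finset.sum_nonneg fun i _ => Real.sqrt_nonneg _


section TensorPow
variable {d : ℕ}

lemma tensorPow_mul (A B : Matrix (Fin d) (Fin d) ℂ) (n : ℕ) :
    tensorPow A n * tensorPow B n = tensorPow (A * B) n := by
  ext i j
  simp only [tensorPow, Matrix.mul_apply, Matrix.of_apply]
  rw [Finset.prod_univ_sum, Fintype.piFinset_univ]
  exact Finset.sum_congr rfl fun x _ => Finset.prod_mul_distrib.symm

lemma tensorPow_conjTranspose (A : Matrix (Fin d) (Fin d) ℂ) (n : ℕ) :
    (tensorPow A n)ᴴ = tensorPow Aᴴ n := by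
  ext i j
  simp [tensorPow, Matrix.conjTranspose_apply, map_prod]

lemma tensorPow_trace (A : Matrix (Fin d) (Fin d) ℂ) (n : ℕ) :
    (tensorPow A n).trace = A.trace ^ n := by
  simp only [Matrix.trace, Matrix.diag, tensorPow, Matrix.of_apply]
  rw [← Fin.prod_const n (∑ j, A j j), Finset.prod_univ_sum, Fintype.piFinset_univ]

lemma tensorPow_posSemidef {A : Matrix (Fin d) (Fin d) ℂ} (hA : A.PosSemidef) (n : ℕ) :
    (tensorPow A n).PosSemidef := by
  have h1 : A = (matSqrt A)ᴴ * matSqrt A := by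
    rw [(matSqrt_hermitian hA).eq, matSqrt_mul_self hA]
  rw [h1, ← tensorPow_mul, ← tensorPow_conjTranspose]
  exact Matrix.posSemidef_conjTranspose_mul_self _

lemma tensorPow_matSqrt {A : Matrix (Fin d) (Fin d) ℂ} (hA : A.PosSemidef) (n : ℕ) :
    matSqrt (tensorPow A n) = tensorPow (matSqrt A) n := by
  rw [matSqrt_eq (tensorPow_posSemidef hA n)]
  refine (Matrix.PosSemidef.eq_sqrt_of_sq_eq (tensorPow_posSemidef (matSqrt_posSemidef hA) n)
    _ ?_).symm
  rw [pow_two, tensorPow_mul, matSqrt_mul_self hA]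

end TensorPow


/-! ### Complex vector norms and Cauchy-Schwarz -/

def cnorm (v : ι → ℂ) : ℝ := Real.sqrt ((dotProduct (star v) v).re)

lemma dot_self_eq (v : ι → ℂ) :
    dotProduct (star v) v = ((∑ i, Complex.normSq (v i) : ℝ) : ℂ) := by
  push_cast
  simp [dotProduct, Pi.star_apply, Complex.normSq_eq_conj_mul_self]

lemma dot_self_re_nonneg (v : ι → ℂ) : 0 ≤ (dotProduct (star v) v).re := by
  rw [dot_self_eq]
  simpa using Finset.sum_nonneg fun i _ => Complex.normSq_nonneg (v i)

lemma cnorm_sq (v : ι → ℂ) : cnorm v ^ 2 = (dotProduct (star v) v).re :=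
  Real.sq_sqrt (dot_self_re_nonneg v)

lemma cnorm_nonneg (v : ι → ℂ) : 0 ≤ cnorm v := Real.sqrt_nonneg _

lemma cnorm_eq_norm (v : ι → ℂ) : cnorm v = ‖(WithLp.equiv 2 (ι → ℂ)).symm v‖ := by
  rw [EuclideanSpace.norm_eq, cnorm, dot_self_eq]
  congr 1
  rw [Complex.ofReal_re]
  exact Finset.sum_congr rfl fun i _ => (Complex.sq_norm (v i)).symm

lemma inner_eq_dot (x y : ι → ℂ) :
    (inner ℂ ((WithLp.equiv 2 (ι → ℂ)).symm x) ((WithLp.equiv 2 (ι → ℂ)).symm y) : ℂ)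
      = dotProduct (star x) y := by
  simp [PiLp.inner_apply, RCLike.inner_apply, dotProduct, Pi.star_apply]
  exact Finset.sum_congr rfl fun i _ => mul_comm _ _

/-- Cauchy–Schwarz for the complex dot product. -/
lemma re_dot_le_cnorm (x y : ι → ℂ) :
    (dotProduct (star x) y).re ≤ cnorm x * cnorm y := by
  rw [cnorm_eq_norm, cnorm_eq_norm, ← inner_eq_dot]
  calc (inner ℂ ((WithLp.equiv 2 (ι → ℂ)).symm x) ((WithLp.equiv 2 (ι → ℂ)).symm y) : ℂ).re
      ≤ ‖(inner ℂ ((WithLp.equiv 2 (ι → ℂ)).symm x) ((WithLp.equiv 2 (ι → ℂ)).symm y) : ℂ)‖ :=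
        Complex.re_le_norm _
    _ ≤ _ := norm_inner_le_norm _ _


lemma star_dot_mulVec (N K : Matrix ι ι ℂ) (x y : ι → ℂ) :
    dotProduct (star x) ((Nᴴ * K) *ᵥ y)
      = dotProduct (star (N *ᵥ x)) (K *ᵥ y) := by
  rw [← Matrix.mulVec_mulVec, Matrix.dotProduct_mulVec, Matrix.star_mulVec]

lemma sandwich_dot {P : Matrix ι ι ℂ} (hP : P.IsHermitian) (C : Matrix ι ι ℂ) (u : ι → ℂ) :
    dotProduct (star (P *ᵥ u)) (C *ᵥ (P *ᵥ u))
      = dotProduct (star u) ((P * C * P) *ᵥ u) := by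
  rw [Matrix.mulVec_mulVec, Matrix.mul_assoc, ← hP.eq, star_dot_mulVec, hP.eq]

lemma entry_eq_dot' (U X : Matrix ι ι ℂ) (i j : ι) :
    (star U * X * U) i j
      = dotProduct (star (fun a => U a i)) (X *ᵥ (fun a => U a j)) := by
  simp [Matrix.mul_apply, dotProduct, Matrix.mulVec, Finset.mul_sum, Finset.sum_mul,
    Matrix.conjTranspose_apply, mul_assoc]
  rw [Finset.sum_comm]

lemma col_orthonormal {A : Matrix ι ι ℂ} (hA : A.IsHermitian) (i j : ι) :
    dotProduct (star (fun a => (hA.eigenvectorUnitary : Matrix ι ι ℂ) a i))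
      (fun a => (hA.eigenvectorUnitary : Matrix ι ι ℂ) a j) = if i = j then 1 else 0 := by
  have h := congrFun (congrFun (star_mul_selfU hA) i) j
  rw [Matrix.one_apply] at h
  rw [← h, Matrix.mul_apply]
  simp [dotProduct, Matrix.star_apply, Pi.star_apply]

lemma dot_eigen {A : Matrix ι ι ℂ} (hA : A.IsHermitian) (i j : ι) :
    dotProduct (star (fun a => (hA.eigenvectorUnitary : Matrix ι ι ℂ) a i))
      (A *ᵥ (fun a => (hA.eigenvectorUnitary : Matrix ι ι ℂ) a j))
      = if i = j then (hA.eigenvalues j : ℂ) else 0 := by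
  rw [← entry_eq_dot', hA.star_mul_self_mul_eq_diagonal, Matrix.diagonal_apply]
  split_ifs with h
  · subst h; rfl
  · rfl

lemma trace_mul_vecMulVec (G : Matrix ι ι ℂ) (u : ι → ℂ) :
    (G * Matrix.vecMulVec u (star u)).trace = dotProduct (star u) (G *ᵥ u) := by
  simp only [Matrix.trace, Matrix.diag, Matrix.mul_apply, Matrix.vecMulVec_apply,
    dotProduct, Matrix.mulVec, Pi.star_apply, Finset.mul_sum]
  exact Finset.sum_congr rfl fun a _ => Finset.sum_congr rfl fun b _ => by ring

lemma vecMulVec_mul_vecMulVec (x y z w : ι → ℂ) :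
    Matrix.vecMulVec x (star y) * Matrix.vecMulVec z (star w)
      = dotProduct (star y) z • Matrix.vecMulVec x (star w) := by
  ext i j
  simp only [Matrix.mul_apply, Matrix.vecMulVec_apply, Matrix.smul_apply, dotProduct,
    Pi.star_apply, smul_eq_mul, Finset.sum_mul, Finset.mul_sum]
  exact Finset.sum_congr rfl fun a _ => by ring

lemma psd_of_idem {T : Matrix ι ι ℂ} (hH : T.IsHermitian) (hI : T * T = T) : T.PosSemidef := by
  have := Matrix.posSemidef_conjTranspose_mul_self T
  rwa [hH.eq, hI] at this

lemma vecMulVec_isHermitian (u : ι → ℂ) : (Matrix.vecMulVec u (star u)).IsHermitian := by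
  ext i j
  simp [Matrix.conjTranspose_apply, Matrix.vecMulVec_apply, mul_comm]


lemma cnorm_sq_sandwich {P Q : Matrix ι ι ℂ} (hP : P.PosSemidef) (hQ : Q.PosSemidef)
    (z : ι → ℂ) :
    cnorm (matSqrt P *ᵥ (matSqrt Q *ᵥ z)) ^ 2
      = (dotProduct (star z) ((matSqrt Q * P * matSqrt Q) *ᵥ z)).re := by
  rw [cnorm_sq, ← star_dot_mulVec (matSqrt P) (matSqrt P), (matSqrt_hermitian hP).eq,
    Matrix.mulVec_mulVec, matSqrt_mul_self hP, ← Matrix.mulVec_mulVec,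
    sandwich_dot (matSqrt_hermitian hQ) P z]

/-- **Data processing inequality for the fidelity** under a two-outcome measurement. -/
lemma data_processing {A B Λ : Matrix ι ι ℂ} (hA : A.PosSemidef) (hB : B.PosSemidef)
    (hΛ : Λ.PosSemidef) (hΛ' : (1 - Λ).PosSemidef) :
    traceNorm (matSqrt A * matSqrt B)
      ≤ Real.sqrt (((Λ * A).trace.re) * ((Λ * B).trace.re))
        + Real.sqrt ((((1 - Λ) * A).trace.re) * (((1 - Λ) * B).trace.re)) := by
  have hmA := matSqrt_hermitian hA
  have hmB := matSqrt_hermitian hB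
  set M : Matrix ι ι ℂ := matSqrt A * matSqrt B with hMdef
  have hC : (Mᴴ * M).PosSemidef := Matrix.posSemidef_conjTranspose_mul_self M
  set h : (Mᴴ * M).IsHermitian := hC.1 with hhdef
  set U : Matrix ι ι ℂ := (h.eigenvectorUnitary : Matrix ι ι ℂ) with hUdef
  set ν : ι → ℝ := h.eigenvalues with hνdef
  have hν : ∀ i, 0 ≤ ν i := hC.eigenvalues_nonneg
  set S : Finset ι := Finset.univ.filter (fun i => 0 < ν i) with hSdef
  -- the w and u vectors
  set w : ι → ι → ℂ := fun i => M *ᵥ (fun a => U a i) with hwdef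
  set u : ι → ι → ℂ := fun i => ((Real.sqrt (ν i) : ℝ) : ℂ)⁻¹ • w i with hudef
  have key : ∀ i j, dotProduct (star (w i)) (w j)
      = if i = j then (ν j : ℂ) else 0 := by
    intro i j
    rw [hwdef]
    simp only []
    rw [← star_dot_mulVec M M _ _, dot_eigen h i j]
  have uu : ∀ i ∈ S, ∀ j ∈ S, dotProduct (star (u i)) (u j)
      = if i = j then 1 else 0 := by
    intro i hi j hj
    rw [hSdef] at hi hj
    have hi' : 0 < ν i := (Finset.mem_filter.mp hi).2
    have hj' : 0 < ν j := (Finset.mem_filter.mp hj).2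
    rw [hudef]
    simp only [star_smul, smul_dotProduct, dotProduct_smul, key i j]
    split_ifs with hij
    · subst hij
      have hmul : (((Real.sqrt (ν i) : ℝ) : ℂ))⁻¹ * ((((Real.sqrt (ν i) : ℝ) : ℂ))⁻¹ * (ν i : ℂ))
          = 1 := by
        have hs : Real.sqrt (ν i) * Real.sqrt (ν i) = ν i := Real.mul_self_sqrt (hν i)
        have hs0 : Real.sqrt (ν i) ≠ 0 := ne_of_gt (Real.sqrt_pos.mpr hi')
        rw [← Complex.ofReal_inv, ← hs]
        push_cast
        field_simp
        rw [Real.sqrt_sq (Real.sqrt_nonneg _)]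
      simpa [smul_eq_mul, Complex.star_def, map_inv₀, Complex.conj_ofReal] using hmul
    · simp
  -- the measured overlap bound for a single PSD effect
  have master : ∀ (Λ₀ : Matrix ι ι ℂ), Λ₀.PosSemidef →
      ∑ i ∈ S, (cnorm (matSqrt Λ₀ *ᵥ (matSqrt A *ᵥ u i))
        * cnorm (matSqrt Λ₀ *ᵥ (matSqrt B *ᵥ (fun x => U x i))))
      ≤ Real.sqrt (((Λ₀ * A).trace.re) * ((Λ₀ * B).trace.re)) := by
    intro Λ₀ hΛ₀
    have hG : (matSqrt A * Λ₀ * matSqrt A).PosSemidef := by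
      have := hΛ₀.conjTranspose_mul_mul_same (B := matSqrt A)
      rwa [hmA.eq] at this
    have hG' : (matSqrt B * Λ₀ * matSqrt B).PosSemidef := by
      have := hΛ₀.conjTranspose_mul_mul_same (B := matSqrt B)
      rwa [hmB.eq] at this
    set T : Matrix ι ι ℂ := ∑ i ∈ S, Matrix.vecMulVec (u i) (star (u i)) with hTdef
    have hTherm : T.IsHermitian := by
      rw [Matrix.IsHermitian, hTdef, Matrix.conjTranspose_sum]
      exact Finset.sum_congr rfl fun i _ => vecMulVec_isHermitian (u i)
    have hTT : T * T = T := by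
      rw [hTdef, Finset.sum_mul_sum]
      have h1 : ∀ i ∈ S, ∀ j ∈ S,
          Matrix.vecMulVec (u i) (star (u i)) * Matrix.vecMulVec (u j) (star (u j))
            = (if i = j then (1:ℂ) else 0) • Matrix.vecMulVec (u i) (star (u j)) := by
        intro i hi j hj
        rw [vecMulVec_mul_vecMulVec, uu i hi j hj]
      calc ∑ i ∈ S, ∑ j ∈ S,
            Matrix.vecMulVec (u i) (star (u i)) * Matrix.vecMulVec (u j) (star (u j))
          = ∑ i ∈ S, ∑ j ∈ S,
            (if i = j then (1:ℂ) else 0) • Matrix.vecMulVec (u i) (star (u j)) :=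
            Finset.sum_congr rfl fun i hi => Finset.sum_congr rfl fun j hj => h1 i hi j hj
        _ = ∑ i ∈ S, Matrix.vecMulVec (u i) (star (u i)) := by
            refine Finset.sum_congr rfl fun i hi => ?_
            rw [Finset.sum_eq_single i]
            · simp
            · intro j _ hji; simp [Ne.symm hji]
            · intro hiS; exact absurd hi hiS
    have h1T : (1 - T).PosSemidef := by
      refine psd_of_idem ?_ ?_
      · rw [Matrix.IsHermitian, Matrix.conjTranspose_sub, hTherm.eq, Matrix.conjTranspose_one]
      · rw [Matrix.mul_sub, Matrix.mul_one, Matrix.sub_mul, Matrix.one_mul, hTT]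
        abel
    have hsum_a : ∑ i ∈ S, (cnorm (matSqrt Λ₀ *ᵥ (matSqrt A *ᵥ u i))) ^ 2
        ≤ ((Λ₀ * A).trace).re := by
      have e1 : ∑ i ∈ S, (cnorm (matSqrt Λ₀ *ᵥ (matSqrt A *ᵥ u i))) ^ 2
          = (((matSqrt A * Λ₀ * matSqrt A) * T).trace).re := by
        rw [hTdef, Finset.mul_sum, Matrix.trace_sum, Complex.re_sum]
        refine Finset.sum_congr rfl fun i hi => ?_
        rw [cnorm_sq_sandwich hΛ₀ hA, trace_mul_vecMulVec]
      rw [e1]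
      have h2 := psd_mul_psd_trace_re_nonneg hG h1T
      rw [Matrix.mul_sub, Matrix.mul_one, Matrix.trace_sub, Complex.sub_re] at h2
      have e3 : ((matSqrt A * Λ₀ * matSqrt A).trace).re = ((Λ₀ * A).trace).re := by
        rw [Matrix.trace_mul_comm, ← Matrix.mul_assoc, matSqrt_mul_self hA,
          Matrix.trace_mul_comm]
      linarith
    have hsum_b : ∑ i ∈ S, (cnorm (matSqrt Λ₀ *ᵥ (matSqrt B *ᵥ (fun x => U x i)))) ^ 2
        ≤ ((Λ₀ * B).trace).re := by
      have e0 : ∑ i ∈ S, (cnorm (matSqrt Λ₀ *ᵥ (matSqrt B *ᵥ (fun x => U x i)))) ^ 2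
          ≤ ∑ i, (cnorm (matSqrt Λ₀ *ᵥ (matSqrt B *ᵥ (fun x => U x i)))) ^ 2 :=
        Finset.sum_le_sum_of_subset_of_nonneg (Finset.subset_univ S)
          (fun i _ _ => sq_nonneg _)
      refine le_trans e0 (le_of_eq ?_)
      have e1 : ∀ i, (cnorm (matSqrt Λ₀ *ᵥ (matSqrt B *ᵥ (fun x => U x i)))) ^ 2
          = ((star U * (matSqrt B * Λ₀ * matSqrt B) * U) i i).re := by
        intro i
        rw [cnorm_sq_sandwich hΛ₀ hB, entry_eq_dot']
      simp_rw [e1]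
      rw [← Complex.re_sum]
      have e2 : ∑ i, (star U * (matSqrt B * Λ₀ * matSqrt B) * U) i i
          = ((matSqrt B * Λ₀ * matSqrt B)).trace := by
        rw [show ∑ i, (star U * (matSqrt B * Λ₀ * matSqrt B) * U) i i
            = (star U * (matSqrt B * Λ₀ * matSqrt B) * U).trace from rfl]
        rw [Matrix.trace_mul_comm, ← Matrix.mul_assoc, mul_self_starU h, Matrix.one_mul]
      rw [e2]
      congr 1
      rw [Matrix.trace_mul_comm, ← Matrix.mul_assoc, matSqrt_mul_self hB,
        Matrix.trace_mul_comm]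
    -- Cauchy-Schwarz over the index set S
    have hab : 0 ≤ ∑ i ∈ S, (cnorm (matSqrt Λ₀ *ᵥ (matSqrt A *ᵥ u i))
        * cnorm (matSqrt Λ₀ *ᵥ (matSqrt B *ᵥ (fun x => U x i)))) :=
      Finset.sum_nonneg fun i _ => mul_nonneg (cnorm_nonneg _) (cnorm_nonneg _)
    have hcs := Finset.sum_mul_sq_le_sq_mul_sq S
      (fun i => cnorm (matSqrt Λ₀ *ᵥ (matSqrt A *ᵥ u i)))
      (fun i => cnorm (matSqrt Λ₀ *ᵥ (matSqrt B *ᵥ (fun x => U x i))))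
    have htrB : 0 ≤ ((Λ₀ * B).trace).re := psd_mul_psd_trace_re_nonneg hΛ₀ hB
    have hsq : (∑ i ∈ S, (cnorm (matSqrt Λ₀ *ᵥ (matSqrt A *ᵥ u i))
        * cnorm (matSqrt Λ₀ *ᵥ (matSqrt B *ᵥ (fun x => U x i))))) ^ 2
        ≤ ((Λ₀ * A).trace).re * ((Λ₀ * B).trace).re := by
      refine le_trans hcs (mul_le_mul hsum_a hsum_b ?_ ?_)
      · exact Finset.sum_nonneg fun i _ => sq_nonneg _
      · exact psd_mul_psd_trace_re_nonneg hΛ₀ hA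
    calc ∑ i ∈ S, (cnorm (matSqrt Λ₀ *ᵥ (matSqrt A *ᵥ u i))
          * cnorm (matSqrt Λ₀ *ᵥ (matSqrt B *ᵥ (fun x => U x i))))
        = Real.sqrt ((∑ i ∈ S, (cnorm (matSqrt Λ₀ *ᵥ (matSqrt A *ᵥ u i))
          * cnorm (matSqrt Λ₀ *ᵥ (matSqrt B *ᵥ (fun x => U x i))))) ^ 2) :=
          (Real.sqrt_sq hab).symm
      _ ≤ _ := Real.sqrt_le_sqrt hsq
  -- the trace norm as a sum over nonzero singular values
  have step1 : traceNorm M = ∑ i ∈ S, Real.sqrt (ν i) := by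
    rw [traceNorm_eq_sum_sqrt M]
    show ∑ i, Real.sqrt (ν i) = ∑ i ∈ S, Real.sqrt (ν i)
    refine (Finset.sum_subset (Finset.subset_univ S) fun x _ hx => ?_).symm
    rw [hSdef, Finset.mem_filter] at hx
    push_neg at hx
    have : ν x = 0 := le_antisymm (hx (Finset.mem_univ x)) (hν x)
    rw [this, Real.sqrt_zero]
  -- pointwise bound on the singular values
  have step2 : ∀ i ∈ S, Real.sqrt (ν i)
      ≤ cnorm (matSqrt Λ *ᵥ (matSqrt A *ᵥ u i))
          * cnorm (matSqrt Λ *ᵥ (matSqrt B *ᵥ (fun x => U x i)))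
        + cnorm (matSqrt (1 - Λ) *ᵥ (matSqrt A *ᵥ u i))
          * cnorm (matSqrt (1 - Λ) *ᵥ (matSqrt B *ᵥ (fun x => U x i))) := by
    intro i hi
    have hi' : 0 < ν i := by
      rw [hSdef, Finset.mem_filter] at hi; exact hi.2
    have e1 : dotProduct (star (u i)) (w i) = ((Real.sqrt (ν i) : ℝ) : ℂ) := by
      rw [hudef]
      simp only [star_smul, smul_dotProduct, key i i, if_pos rfl, if_true, smul_eq_mul,
        Complex.star_def, map_inv₀, Complex.conj_ofReal]
      rw [← Complex.ofReal_inv, ← Complex.ofReal_mul]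
      congr 1
      have hs0 : Real.sqrt (ν i) ≠ 0 := ne_of_gt (Real.sqrt_pos.mpr hi')
      field_simp
      exact (Real.sq_sqrt (hν i)).symm
    have hsplit : M = matSqrt A * Λ * matSqrt B + matSqrt A * (1 - Λ) * matSqrt B := by
      rw [hMdef]; noncomm_ring
    have efact : ∀ (Λ₀ : Matrix ι ι ℂ), Λ₀.PosSemidef →
        matSqrt A * Λ₀ * matSqrt B
          = (matSqrt Λ₀ * matSqrt A)ᴴ * (matSqrt Λ₀ * matSqrt B) := by
      intro Λ₀ hΛ₀
      rw [Matrix.conjTranspose_mul, (matSqrt_hermitian hΛ₀).eq, hmA.eq,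
        Matrix.mul_assoc (matSqrt A) (matSqrt Λ₀), ← Matrix.mul_assoc (matSqrt Λ₀) (matSqrt Λ₀),
        matSqrt_mul_self hΛ₀, Matrix.mul_assoc]
    have ebound : ∀ (Λ₀ : Matrix ι ι ℂ), (hΛ₀ : Λ₀.PosSemidef) →
        (dotProduct (star (u i))
          ((matSqrt A * Λ₀ * matSqrt B) *ᵥ (fun x => U x i))).re
        ≤ cnorm (matSqrt Λ₀ *ᵥ (matSqrt A *ᵥ u i))
          * cnorm (matSqrt Λ₀ *ᵥ (matSqrt B *ᵥ (fun x => U x i))) := by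
      intro Λ₀ hΛ₀
      rw [efact Λ₀ hΛ₀, star_dot_mulVec, ← Matrix.mulVec_mulVec, ← Matrix.mulVec_mulVec]
      exact re_dot_le_cnorm _ _
    have e2 : Real.sqrt (ν i)
        = (dotProduct (star (u i))
            ((matSqrt A * Λ * matSqrt B) *ᵥ (fun x => U x i))).re
          + (dotProduct (star (u i))
            ((matSqrt A * (1 - Λ) * matSqrt B) *ᵥ (fun x => U x i))).re := by
      have e3 : dotProduct (star (u i)) (w i)
          = dotProduct (star (u i))
              ((matSqrt A * Λ * matSqrt B) *ᵥ (fun x => U x i))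
            + dotProduct (star (u i))
              ((matSqrt A * (1 - Λ) * matSqrt B) *ᵥ (fun x => U x i)) := by
        rw [hwdef]
        simp only []
        rw [hsplit, Matrix.add_mulVec, dotProduct_add]
      rw [← Complex.add_re, ← e3, e1, Complex.ofReal_re]
    rw [e2]
    exact add_le_add (ebound Λ hΛ) (ebound (1 - Λ) hΛ')
  calc traceNorm M = ∑ i ∈ S, Real.sqrt (ν i) := step1
    _ ≤ ∑ i ∈ S, (cnorm (matSqrt Λ *ᵥ (matSqrt A *ᵥ u i))
          * cnorm (matSqrt Λ *ᵥ (matSqrt B *ᵥ (fun x => U x i)))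
        + cnorm (matSqrt (1 - Λ) *ᵥ (matSqrt A *ᵥ u i))
          * cnorm (matSqrt (1 - Λ) *ᵥ (matSqrt B *ᵥ (fun x => U x i)))) :=
      Finset.sum_le_sum step2
    _ = ∑ i ∈ S, (cnorm (matSqrt Λ *ᵥ (matSqrt A *ᵥ u i))
          * cnorm (matSqrt Λ *ᵥ (matSqrt B *ᵥ (fun x => U x i))))
        + ∑ i ∈ S, (cnorm (matSqrt (1 - Λ) *ᵥ (matSqrt A *ᵥ u i))
          * cnorm (matSqrt (1 - Λ) *ᵥ (matSqrt B *ᵥ (fun x => U x i)))) :=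
      Finset.sum_add_distrib
    _ ≤ _ := add_le_add (master Λ hΛ) (master (1 - Λ) hΛ')


lemma matFun_add {A : Matrix ι ι ℂ} (hA : A.IsHermitian) (f g : ℝ → ℝ) :
    matFun hA f + matFun hA g = matFun hA (fun x => f x + g x) := by
  unfold matFun
  rw [← Matrix.add_mul, ← Matrix.mul_add, Matrix.diagonal_add]
  push_cast
  rfl

lemma matFun_one {A : Matrix ι ι ℂ} (hA : A.IsHermitian) :
    matFun hA (fun _ => 1) = 1 := by
  unfold matFun
  rw [show Matrix.diagonal (fun i => ((1:ℝ) : ℂ)) = (1 : Matrix ι ι ℂ) by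
    simp [Matrix.diagonal_one], Matrix.mul_one, mul_self_starU]

lemma one_sub_matFun {A : Matrix ι ι ℂ} (hA : A.IsHermitian) (f : ℝ → ℝ) :
    1 - matFun hA f = matFun hA (fun x => 1 - f x) := by
  have h := matFun_add hA (fun x => 1 - f x) f
  simp only [sub_add_cancel] at h
  rw [matFun_one hA] at h
  exact (eq_sub_of_add_eq h).symm

lemma psd_smul {A : Matrix ι ι ℂ} (hA : A.PosSemidef) {c : ℝ} (hc : 0 ≤ c) :
    ((c : ℂ) • A).PosSemidef := by
  refine Matrix.PosSemidef.of_dotProduct_mulVec_nonneg ?_ ?_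
  · rw [Matrix.IsHermitian, Matrix.conjTranspose_smul, hA.1.eq, Complex.star_def,
      Complex.conj_ofReal]
  · intro x
    rw [Matrix.smul_mulVec, dotProduct_smul, smul_eq_mul]
    exact mul_nonneg (Complex.zero_le_real.mpr hc) (hA.dotProduct_mulVec_nonneg x)

/-- **Powers–Størmer inequality.** -/
lemma powers_stormer {A B : Matrix ι ι ℂ} (hA : A.PosSemidef) (hB : B.PosSemidef) :
    (A.trace).re + (B.trace).re - traceNorm (A - B)
      ≤ 2 * ((matSqrt A * matSqrt B).trace).re := by
  have hmA := matSqrt_hermitian hA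
  have hmB := matSqrt_hermitian hB
  set H : Matrix ι ι ℂ := matSqrt A - matSqrt B with hHdef
  set K : Matrix ι ι ℂ := matSqrt A + matSqrt B with hKdef
  have hH : H.IsHermitian := hmA.sub hmB
  have hK : K.IsHermitian := hmA.add hmB
  have hAB : (A - B).IsHermitian := hA.1.sub hB.1
  set f : ℝ → ℝ := fun x => if 0 ≤ x then 1 else -1 with hfdef
  set W : Matrix ι ι ℂ := matFun hH f with hWdef
  -- W * H = H * W = |H|
  have hWH : W * H = matFun hH (fun x => |x|) := by
    have h1 : W * matFun hH (fun x => x) = matFun hH (fun x => |x|) := by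
      rw [hWdef, matFun_mul_matFun]
      refine matFun_congr hH fun i => ?_
      rcases le_or_gt 0 (hH.eigenvalues i) with hx | hx
      · simp [hfdef, hx, abs_of_nonneg hx]
      · simp [hfdef, not_le.mpr hx, abs_of_neg hx]
    rwa [matFun_id hH] at h1
  have hHW : H * W = matFun hH (fun x => |x|) := by
    have h1 : matFun hH (fun x => x) * W = matFun hH (fun x => |x|) := by
      rw [hWdef, matFun_mul_matFun]
      refine matFun_congr hH fun i => ?_
      rcases le_or_gt 0 (hH.eigenvalues i) with hx | hx
      · simp [hfdef, hx, abs_of_nonneg hx]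
      · simp [hfdef, not_le.mpr hx, abs_of_neg hx]
    rwa [matFun_id hH] at h1
  -- identity : (A-B) + (A-B) = H*K + K*H
  have hHK : H * K + K * H = (A - B) + (A - B) := by
    calc H * K + K * H
        = (matSqrt A * matSqrt A + matSqrt A * matSqrt A)
          - (matSqrt B * matSqrt B + matSqrt B * matSqrt B) := by
          rw [hHdef, hKdef]; noncomm_ring
      _ = (A - B) + (A - B) := by
          rw [matSqrt_mul_self hA, matSqrt_mul_self hB]; noncomm_ring
  -- Tr[(A-B) W] = Tr[K |H|]
  have htr1 : ((A - B) * W).trace = (K * matFun hH (fun x => |x|)).trace := by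
    have h3 : ((A - B) + (A - B)) * W = (H * K + K * H) * W := by rw [hHK]
    have h4 := congrArg Matrix.trace h3
    rw [Matrix.add_mul, Matrix.trace_add, Matrix.add_mul, Matrix.trace_add] at h4
    have e1 : (H * K * W).trace = (K * matFun hH (fun x => |x|)).trace := by
      rw [Matrix.trace_mul_comm, ← Matrix.mul_assoc, hWH, Matrix.trace_mul_comm]
    have e2 : (K * H * W).trace = (K * matFun hH (fun x => |x|)).trace := by
      rw [Matrix.mul_assoc, hHW]
    rw [e1, e2] at h4
    have h5 : (2:ℂ) * ((A - B) * W).trace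
        = 2 * (K * matFun hH (fun x => |x|)).trace := by
      rw [two_mul, two_mul]; exact h4
    exact mul_left_cancel₀ two_ne_zero h5
  -- |f| ≤ 1 entries bound : Tr[(A-B)W].re ≤ traceNorm (A-B)
  have hbound1 : (((A - B) * W).trace).re ≤ traceNorm (A - B) := by
    have h1W : (1 - W).PosSemidef := by
      rw [hWdef, one_sub_matFun]
      refine matFun_posSemidef hH fun i => ?_
      rw [hfdef]
      by_cases hx : 0 ≤ hH.eigenvalues i <;> simp [hx] <;> norm_num
    have h1W' : (1 + W).PosSemidef := by
      have e := matFun_add hH (fun _ => 1) f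
      rw [matFun_one hH] at e
      rw [hWdef, e]
      refine matFun_posSemidef hH fun i => ?_
      by_cases hx : 0 ≤ hH.eigenvalues i <;> simp [hfdef, hx] <;> norm_num
    have htr := trace_matFun_mul hAB (fun x => x) W
    rw [matFun_id hAB] at htr
    rw [htr, Complex.re_sum, traceNorm_hermitian hAB]
    set V : Matrix ι ι ℂ := (hAB.eigenvectorUnitary : Matrix ι ι ℂ) with hVdef
    refine Finset.sum_le_sum fun i _ => ?_
    rw [Complex.re_ofReal_mul]
    have eV : star V * (1 - W) * V = 1 - star V * W * V := by
      rw [Matrix.mul_sub, Matrix.mul_one, Matrix.sub_mul, star_mul_selfU hAB]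
    have eV' : star V * (1 + W) * V = 1 + star V * W * V := by
      rw [Matrix.mul_add, Matrix.mul_one, Matrix.add_mul, star_mul_selfU hAB]
    have hle : ((star V * W * V) i i).re ≤ 1 := by
      have h0 := complex_nonneg_re (psd_entry_nonneg h1W V i)
      rw [eV] at h0
      simp only [Matrix.sub_apply, Matrix.one_apply_eq, Complex.sub_re, Complex.one_re] at h0
      linarith
    have hge : -1 ≤ ((star V * W * V) i i).re := by
      have h0 := complex_nonneg_re (psd_entry_nonneg h1W' V i)
      rw [eV'] at h0
      simp only [Matrix.add_apply, Matrix.one_apply_eq, Complex.add_re, Complex.one_re] at h0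
      linarith
    calc hAB.eigenvalues i * ((star V * W * V) i i).re
        ≤ |hAB.eigenvalues i * ((star V * W * V) i i).re| := le_abs_self _
      _ = |hAB.eigenvalues i| * |((star V * W * V) i i).re| := abs_mul _ _
      _ ≤ |hAB.eigenvalues i| * 1 := by
          refine mul_le_mul_of_nonneg_left ?_ (abs_nonneg _)
          exact abs_le.mpr ⟨hge, hle⟩
      _ = |hAB.eigenvalues i| := mul_one _
  -- Tr[H^2].re ≤ Tr[K |H|].re
  have hHH : H * H = matFun hH (fun x => x * x) := by
    have h1 := matFun_mul_matFun hH (fun x => x) (fun x => x)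
    rwa [matFun_id hH] at h1
  have hbound2 : ((H * H).trace).re ≤ ((K * matFun hH (fun x => |x|)).trace).re := by
    have hKH : (K - H).PosSemidef := by
      have e : K - H = matSqrt B + matSqrt B := by rw [hKdef, hHdef]; abel
      rw [e]; exact (matSqrt_posSemidef hB).add (matSqrt_posSemidef hB)
    have hKH' : (K + H).PosSemidef := by
      have e : K + H = matSqrt A + matSqrt A := by rw [hKdef, hHdef]; abel
      rw [e]; exact (matSqrt_posSemidef hA).add (matSqrt_posSemidef hA)
    rw [hHH, trace_matFun, Matrix.trace_mul_comm, trace_matFun_mul hH (fun x => |x|) K,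
      Complex.re_sum, Complex.re_sum]
    set V : Matrix ι ι ℂ := (hH.eigenvectorUnitary : Matrix ι ι ℂ) with hVdef
    refine Finset.sum_le_sum fun i _ => ?_
    rw [Complex.re_ofReal_mul, Complex.ofReal_re]
    have hdiag : (star V * H * V) i i = ((hH.eigenvalues i : ℝ) : ℂ) := by
      rw [hH.star_mul_self_mul_eq_diagonal]
      simp [Matrix.diagonal_apply_eq, Function.comp]
    have hge : |hH.eigenvalues i| ≤ ((star V * K * V) i i).re := by
      have e1 : star V * (K - H) * V = star V * K * V - star V * H * V := by
        rw [Matrix.mul_sub, Matrix.sub_mul]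
      have e2 : star V * (K + H) * V = star V * K * V + star V * H * V := by
        rw [Matrix.mul_add, Matrix.add_mul]
      have h1 := complex_nonneg_re (psd_entry_nonneg hKH V i)
      rw [e1] at h1
      simp only [Matrix.sub_apply, Complex.sub_re, hdiag, Complex.ofReal_re] at h1
      have h2 := complex_nonneg_re (psd_entry_nonneg hKH' V i)
      rw [e2] at h2
      simp only [Matrix.add_apply, Complex.add_re, hdiag, Complex.ofReal_re] at h2
      exact abs_le.mpr ⟨by linarith, by linarith⟩
    calc hH.eigenvalues i * hH.eigenvalues i
        = |hH.eigenvalues i| * |hH.eigenvalues i| := (abs_mul_abs_self _).symm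
      _ ≤ |hH.eigenvalues i| * ((star V * K * V) i i).re :=
          mul_le_mul_of_nonneg_left hge (abs_nonneg _)
  -- expansion of Tr[H^2]
  have htr2 : ((H * H).trace).re
      = (A.trace).re + (B.trace).re - 2 * ((matSqrt A * matSqrt B).trace).re := by
    have e : H * H = (matSqrt A * matSqrt A + matSqrt B * matSqrt B)
        - (matSqrt A * matSqrt B + matSqrt B * matSqrt A) := by
      rw [hHdef]; noncomm_ring
    rw [e, matSqrt_mul_self hA, matSqrt_mul_self hB, Matrix.trace_sub, Matrix.trace_add,
      Matrix.trace_add, Matrix.trace_mul_comm (matSqrt B) (matSqrt A)]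
    rw [Complex.sub_re, Complex.add_re, Complex.add_re]
    ring
  have hre1 : (((A - B) * W).trace).re = ((K * matFun hH (fun x => |x|)).trace).re := by
    rw [htr1]
  linarith


lemma herm_mul_trace_real {X Y : Matrix ι ι ℂ} (hX : X.IsHermitian) (hY : Y.IsHermitian) :
    ((X * Y).trace) = ((((X * Y).trace).re : ℝ) : ℂ) := by
  have h1 : (starRingEnd ℂ) ((X * Y).trace) = (X * Y).trace := by
    have h2 : ((X * Y)ᴴ).trace = star ((X * Y).trace) := Matrix.trace_conjTranspose _
    rw [Matrix.conjTranspose_mul, hX.eq, hY.eq, Matrix.trace_mul_comm] at h2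
    exact h2.symm
  exact (Complex.conj_eq_iff_re.mp h1).symm

lemma trace_conj_mul_self_zero {X : Matrix ι ι ℂ} (h : ((Xᴴ * X).trace) = 0) : X = 0 := by
  have h1 : (Xᴴ * X).trace = ((∑ j, ∑ i, Complex.normSq (X i j) : ℝ) : ℂ) := by
    push_cast
    simp [Matrix.trace, Matrix.diag, Matrix.mul_apply, Matrix.conjTranspose_apply,
      Complex.normSq_eq_conj_mul_self]
  rw [h1] at h
  norm_cast at h
  have h2 : ∀ j ∈ Finset.univ, ∀ i ∈ Finset.univ, Complex.normSq (X i j) = 0 := by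
    intro j _
    have hj := (Finset.sum_eq_zero_iff_of_nonneg (fun j _ =>
      Finset.sum_nonneg fun i _ => Complex.normSq_nonneg _)).mp h j (Finset.mem_univ j)
    exact fun i _ => (Finset.sum_eq_zero_iff_of_nonneg
      (fun i _ => Complex.normSq_nonneg _)).mp hj i (Finset.mem_univ i)
  ext i j
  simpa using Complex.normSq_eq_zero.mp (h2 j (Finset.mem_univ j) i (Finset.mem_univ i))

lemma psd_trace_zero {X : Matrix ι ι ℂ} (hX : X.PosSemidef) (h : X.trace = 0) : X = 0 := by
  have h1 : ((matSqrt X)ᴴ * matSqrt X).trace = 0 := by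
    rw [(matSqrt_hermitian hX).eq, matSqrt_mul_self hX]; exact h
  have h2 := trace_conj_mul_self_zero h1
  rw [← matSqrt_mul_self hX, h2, Matrix.mul_zero]

section TensorFid
variable {d : ℕ}

lemma traceNorm_eq_matSqrt_trace (A : Matrix ι ι ℂ) :
    traceNorm A = ((matSqrt (Aᴴ * A)).trace).re := by
  rw [traceNorm_eq_sqrt', matSqrt_eq (Matrix.posSemidef_conjTranspose_mul_self A)]

lemma traceNorm_tensorPow (M : Matrix (Fin d) (Fin d) ℂ) (n : ℕ) :
    traceNorm (tensorPow M n) = traceNorm M ^ n := by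
  rw [traceNorm_eq_matSqrt_trace, tensorPow_conjTranspose M n, tensorPow_mul,
    tensorPow_matSqrt (Matrix.posSemidef_conjTranspose_mul_self M) n, tensorPow_trace]
  have h1 : (matSqrt (Mᴴ * M)).trace = ((traceNorm M : ℝ) : ℂ) := by
    rw [traceNorm_eq_matSqrt_trace]
    exact complex_nonneg_eq_re (psd_trace_nonneg (matSqrt_posSemidef
      (Matrix.posSemidef_conjTranspose_mul_self M)))
  rw [h1, ← Complex.ofReal_pow, Complex.ofReal_re]

lemma matSqrt_mul_tensorPow {ρ σ : Matrix (Fin d) (Fin d) ℂ} (hρ : ρ.PosSemidef)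
    (hσ : σ.PosSemidef) (n : ℕ) :
    matSqrt (tensorPow ρ n) * matSqrt (tensorPow σ n)
      = tensorPow (matSqrt ρ * matSqrt σ) n := by
  rw [tensorPow_matSqrt hρ n, tensorPow_matSqrt hσ n, tensorPow_mul]

lemma Fid_tensorPow {ρ σ : Matrix (Fin d) (Fin d) ℂ} (hρ : ρ.PosSemidef)
    (hσ : σ.PosSemidef) (n : ℕ) :
    Fid (tensorPow ρ n) (tensorPow σ n) = Fid ρ σ ^ n := by
  rw [Fid, Fid, matSqrt_mul_tensorPow hρ hσ n, traceNorm_tensorPow, ← pow_mul, ← pow_mul,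
    Nat.mul_comm]

lemma FidH_tensorPow {ρ σ : Matrix (Fin d) (Fin d) ℂ} (hρ : ρ.PosSemidef)
    (hσ : σ.PosSemidef) (n : ℕ) :
    FidH (tensorPow ρ n) (tensorPow σ n) = FidH ρ σ ^ n := by
  have h1 : ((matSqrt ρ * matSqrt σ).trace)
      = ((((matSqrt ρ * matSqrt σ).trace).re : ℝ) : ℂ) :=
    herm_mul_trace_real (matSqrt_hermitian hρ) (matSqrt_hermitian hσ)
  rw [FidH, FidH, matSqrt_mul_tensorPow hρ hσ n, tensorPow_trace, h1, ← Complex.ofReal_pow,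
    Complex.ofReal_re, ← pow_mul, ← pow_mul, Nat.mul_comm]
  simp

lemma re_trace_tensorPow_mul {ρ σ : Matrix (Fin d) (Fin d) ℂ} (hρ : ρ.PosSemidef)
    (hσ : σ.PosSemidef) (n : ℕ) :
    (((matSqrt (tensorPow ρ n) * matSqrt (tensorPow σ n)).trace)).re
      = (((matSqrt ρ * matSqrt σ).trace).re) ^ n := by
  rw [matSqrt_mul_tensorPow hρ hσ n, tensorPow_trace,
    herm_mul_trace_real (matSqrt_hermitian hρ) (matSqrt_hermitian hσ), ← Complex.ofReal_pow,
    Complex.ofReal_re]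
  simp

end TensorFid


lemma matSqrt_smul {A : Matrix ι ι ℂ} (hA : A.PosSemidef) {c : ℝ} (hc : 0 ≤ c) :
    matSqrt ((c : ℂ) • A) = ((Real.sqrt c : ℝ) : ℂ) • matSqrt A := by
  rw [matSqrt_eq (psd_smul hA hc)]
  refine (Matrix.PosSemidef.eq_sqrt_of_sq_eq
    (psd_smul (matSqrt_posSemidef hA) (Real.sqrt_nonneg c)) _ ?_).symm
  rw [pow_two, Matrix.smul_mul, Matrix.mul_smul, smul_smul, ← Complex.ofReal_mul,
    Real.mul_self_sqrt hc, matSqrt_mul_self hA]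

section PErrBounds
variable {d : ℕ}

lemma tensorPow_state_trace {ρ : Matrix (Fin d) (Fin d) ℂ} (hρ : IsState ρ) (n : ℕ) :
    (tensorPow ρ n).trace = 1 := by
  rw [tensorPow_trace, hρ.2, one_pow]

/-- Any element of the `pErr` feasible set is nonnegative. -/
lemma pErr_set_nonneg {ρ σ : Matrix (Fin d) (Fin d) ℂ} (hρ : IsState ρ) (hσ : IsState σ)
    {p q : ℝ} (hp : 0 ≤ p) (hq : 0 ≤ q) (n : ℕ) {x : ℝ}
    (hx : x ∈ { x : ℝ | ∃ Λ : Matrix (Fin n → Fin d) (Fin n → Fin d) ℂ,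
      Λ.PosSemidef ∧ (1 - Λ).PosSemidef ∧
      x = p * (((1 - Λ) * tensorPow ρ n).trace).re + q * ((Λ * tensorPow σ n).trace).re }) :
    0 ≤ x := by
  obtain ⟨Λ, hΛ, hΛ', rfl⟩ := hx
  have h1 := psd_mul_psd_trace_re_nonneg hΛ' (tensorPow_posSemidef hρ.1 n)
  have h2 := psd_mul_psd_trace_re_nonneg hΛ (tensorPow_posSemidef hσ.1 n)
  positivity

lemma pErr_bddBelow {ρ σ : Matrix (Fin d) (Fin d) ℂ} (hρ : IsState ρ) (hσ : IsState σ)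
    {p q : ℝ} (hp : 0 ≤ p) (hq : 0 ≤ q) (n : ℕ) :
    BddBelow { x : ℝ | ∃ Λ : Matrix (Fin n → Fin d) (Fin n → Fin d) ℂ,
      Λ.PosSemidef ∧ (1 - Λ).PosSemidef ∧
      x = p * (((1 - Λ) * tensorPow ρ n).trace).re + q * ((Λ * tensorPow σ n).trace).re } :=
  ⟨0, fun x hx => pErr_set_nonneg hρ hσ hp hq n hx⟩

lemma pErr_set_nonempty {ρ σ : Matrix (Fin d) (Fin d) ℂ} (n : ℕ) (p q : ℝ) :
    ∃ x : ℝ, ∃ Λ : Matrix (Fin n → Fin d) (Fin n → Fin d) ℂ,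
      Λ.PosSemidef ∧ (1 - Λ).PosSemidef ∧
      x = p * (((1 - Λ) * tensorPow ρ n).trace).re + q * ((Λ * tensorPow σ n).trace).re := by
  refine ⟨_, 0, Matrix.PosSemidef.zero, ?_, rfl⟩
  rw [sub_zero]
  exact Matrix.PosSemidef.one

/-- Achievability: the Helstrom test plus Powers–Størmer. -/
lemma pErr_le_holevo {ρ σ : Matrix (Fin d) (Fin d) ℂ} (hρ : IsState ρ) (hσ : IsState σ)
    {p q : ℝ} (hp : 0 ≤ p) (hq : 0 ≤ q) (n : ℕ) :
    pErr p ρ q σ n ≤ Real.sqrt (p * q) * (((matSqrt ρ * matSqrt σ).trace).re) ^ n := by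
  classical
  set Pn := tensorPow ρ n with hPn
  set Qn := tensorPow σ n with hQn
  have hPns : Pn.PosSemidef := tensorPow_posSemidef hρ.1 n
  have hQns : Qn.PosSemidef := tensorPow_posSemidef hσ.1 n
  have hApsd : ((p : ℂ) • Pn).PosSemidef := psd_smul hPns hp
  have hBpsd : ((q : ℂ) • Qn).PosSemidef := psd_smul hQns hq
  set D : Matrix (Fin n → Fin d) (Fin n → Fin d) ℂ := (p : ℂ) • Pn - (q : ℂ) • Qn with hDdef
  have hD : D.IsHermitian := hApsd.1.sub hBpsd.1
  set g : ℝ → ℝ := fun x => if 0 < x then 1 else 0 with hgdef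
  set Λ : Matrix (Fin n → Fin d) (Fin n → Fin d) ℂ := matFun hD g with hΛdef
  have hΛpsd : Λ.PosSemidef := matFun_posSemidef hD fun i => by
    rw [hgdef]; by_cases hx : 0 < hD.eigenvalues i <;> simp [hx]
  have hΛpsd' : (1 - Λ).PosSemidef := by
    rw [hΛdef, one_sub_matFun]
    refine matFun_posSemidef hD fun i => ?_
    rw [hgdef]; by_cases hx : 0 < hD.eigenvalues i <;> simp [hx]
  -- the error of the Helstrom test
  set x₀ : ℝ := p * (((1 - Λ) * Pn).trace).re + q * ((Λ * Qn).trace).re with hx₀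
  have hmem : x₀ ∈ { x : ℝ | ∃ Λ : Matrix (Fin n → Fin d) (Fin n → Fin d) ℂ,
      Λ.PosSemidef ∧ (1 - Λ).PosSemidef ∧
      x = p * (((1 - Λ) * tensorPow ρ n).trace).re + q * ((Λ * tensorPow σ n).trace).re } :=
    ⟨Λ, hΛpsd, hΛpsd', rfl⟩
  have hle : pErr p ρ q σ n ≤ x₀ := csInf_le (pErr_bddBelow hρ hσ hp hq n) hmem
  refine le_trans hle ?_
  -- rewrite x₀ = p - Re Tr[Λ D]
  have hTrPn : (Pn.trace) = 1 := tensorPow_state_trace hρ n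
  have hTrQn : (Qn.trace) = 1 := tensorPow_state_trace hσ n
  have e1 : x₀ = (p + q) / 2 - traceNorm D / 2 := by
    have eΛD : (Λ * D).trace = ∑ i, ((g (hD.eigenvalues i) * hD.eigenvalues i : ℝ) : ℂ) := by
      have h1 := matFun_mul_matFun hD g (fun x => x)
      rw [matFun_id hD] at h1
      rw [hΛdef, h1, trace_matFun]
    have eΛD' : ((Λ * D).trace).re = ((p - q) + traceNorm D) / 2 := by
      rw [eΛD, Complex.re_sum]
      have e2 : ∀ i, (((g (hD.eigenvalues i) * hD.eigenvalues i : ℝ) : ℂ)).re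
          = (hD.eigenvalues i + |hD.eigenvalues i|) / 2 := by
        intro i
        rw [Complex.ofReal_re, hgdef]
        beta_reduce
        rcases lt_trichotomy 0 (hD.eigenvalues i) with hx | hx | hx
        · rw [if_pos hx, abs_of_pos hx]; ring
        · rw [← hx]; simp
        · rw [if_neg (not_lt.mpr (le_of_lt hx)), abs_of_neg hx]; ring
      rw [Finset.sum_congr rfl fun i _ => e2 i]
      have e3 : ∑ i, hD.eigenvalues i = ((D.trace).re) := by
        have h4 : D.trace = ∑ i, ((hD.eigenvalues i : ℝ) : ℂ) := by
          conv_lhs => rw [← matFun_id hD]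
          rw [trace_matFun]
        rw [h4, Complex.re_sum]
        simp
      have e4 : (D.trace).re = p - q := by
        rw [hDdef, Matrix.trace_sub, Matrix.trace_smul, Matrix.trace_smul, hTrPn, hTrQn,
          Complex.sub_re]
        simp
      rw [traceNorm_hermitian hD, ← Finset.sum_div, Finset.sum_add_distrib, e3, e4]
    -- x₀ = p - Re Tr[Λ D]
    have e5 : x₀ = p - ((Λ * D).trace).re := by
      rw [hx₀]
      have e6 : (1 - Λ) * Pn = Pn - Λ * Pn := by rw [Matrix.sub_mul, Matrix.one_mul]
      have e7 : (Λ * D).trace = (p : ℂ) * (Λ * Pn).trace - (q : ℂ) * (Λ * Qn).trace := by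
        rw [hDdef, Matrix.mul_sub, Matrix.trace_sub, Matrix.mul_smul, Matrix.trace_smul,
          Matrix.mul_smul, Matrix.trace_smul]
        simp [smul_eq_mul]
      rw [e6, Matrix.trace_sub, hTrPn, e7]
      rw [Complex.sub_re, Complex.sub_re, Complex.one_re, Complex.re_ofReal_mul,
        Complex.re_ofReal_mul]
      ring
    rw [e5, eΛD']
    ring
  rw [e1]
  -- Powers-Størmer
  have hPS := powers_stormer hApsd hBpsd
  have eA : (((p : ℂ) • Pn).trace).re = p := by
    rw [Matrix.trace_smul, hTrPn]; simp
  have eB : (((q : ℂ) • Qn).trace).re = q := by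
    rw [Matrix.trace_smul, hTrQn]; simp
  rw [eA, eB] at hPS
  have eS : ((matSqrt ((p : ℂ) • Pn) * matSqrt ((q : ℂ) • Qn)).trace).re
      = Real.sqrt (p * q) * (((matSqrt ρ * matSqrt σ).trace).re) ^ n := by
    rw [matSqrt_smul hPns hp, matSqrt_smul hQns hq, Matrix.smul_mul, Matrix.mul_smul,
      smul_smul, Matrix.trace_smul, ← Complex.ofReal_mul, smul_eq_mul,
      Complex.re_ofReal_mul, ← Real.sqrt_mul hp q, re_trace_tensorPow_mul hρ.1 hσ.1 n]
  rw [eS] at hPS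
  rw [hDdef]
  linarith
end PErrBounds


lemma matFun_zero {A : Matrix ι ι ℂ} (hA : A.IsHermitian) :
    matFun hA (fun _ => 0) = 0 := by
  unfold matFun
  rw [show Matrix.diagonal (fun _ : ι => ((0:ℝ) : ℂ)) = (0 : Matrix ι ι ℂ) by simp,
    Matrix.mul_zero, Matrix.zero_mul]

/-- Converse bound: every test error is at least `p q F^n`. -/
lemma pErr_ge_fid {d : ℕ} {ρ σ : Matrix (Fin d) (Fin d) ℂ} (hρ : IsState ρ) (hσ : IsState σ)
    {p q : ℝ} (hp : 0 ≤ p) (hq : 0 ≤ q) (hpq : p + q = 1) (n : ℕ) :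
    p * q * (Fid ρ σ) ^ n ≤ pErr p ρ q σ n := by
  refine le_csInf ?_ ?_
  · obtain ⟨x, hx⟩ := pErr_set_nonempty (ρ := ρ) (σ := σ) n p q
    exact ⟨x, hx⟩
  rintro x ⟨Λ, hΛ, hΛ', rfl⟩
  set Pn := tensorPow ρ n with hPn
  set Qn := tensorPow σ n with hQn
  have hPns : Pn.PosSemidef := tensorPow_posSemidef hρ.1 n
  have hQns : Qn.PosSemidef := tensorPow_posSemidef hσ.1 n
  set a : ℝ := ((Λ * Pn).trace).re with hadef
  set α : ℝ := (((1 - Λ) * Pn).trace).re with hαdef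
  set β : ℝ := ((Λ * Qn).trace).re with hβdef
  set b : ℝ := (((1 - Λ) * Qn).trace).re with hbdef
  have ha0 : 0 ≤ a := psd_mul_psd_trace_re_nonneg hΛ hPns
  have hα0 : 0 ≤ α := psd_mul_psd_trace_re_nonneg hΛ' hPns
  have hβ0 : 0 ≤ β := psd_mul_psd_trace_re_nonneg hΛ hQns
  have hb0 : 0 ≤ b := psd_mul_psd_trace_re_nonneg hΛ' hQns
  have hsum1 : a + α = 1 := by
    have e : Λ * Pn + (1 - Λ) * Pn = Pn := by noncomm_ring
    have e2 := congrArg (fun M => (Matrix.trace M).re) e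
    simp only [Matrix.trace_add, Complex.add_re] at e2
    rw [hadef, hαdef, e2, tensorPow_state_trace hρ n, Complex.one_re]
  have hsum2 : β + b = 1 := by
    have e : Λ * Qn + (1 - Λ) * Qn = Qn := by noncomm_ring
    have e2 := congrArg (fun M => (Matrix.trace M).re) e
    simp only [Matrix.trace_add, Complex.add_re] at e2
    rw [hβdef, hbdef, e2, tensorPow_state_trace hσ n, Complex.one_re]
  have hDP := data_processing hPns hQns hΛ hΛ'
  rw [← hadef, ← hαdef, ← hβdef, ← hbdef] at hDP
  have hτ : traceNorm (matSqrt Pn * matSqrt Qn) = traceNorm (matSqrt ρ * matSqrt σ) ^ n := by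
    rw [hPn, hQn, matSqrt_mul_tensorPow hρ.1 hσ.1 n, traceNorm_tensorPow]
  set τ : ℝ := traceNorm (matSqrt ρ * matSqrt σ) with hτdef
  have hτ0 : 0 ≤ τ := traceNorm_nonneg _
  have hchain : τ ^ n ≤ Real.sqrt α + Real.sqrt β := by
    rw [← hτ, ]
    refine le_trans hDP ?_
    have h1 : Real.sqrt (a * β) ≤ Real.sqrt β := by
      refine Real.sqrt_le_sqrt ?_
      calc a * β ≤ 1 * β := mul_le_mul_of_nonneg_right (by linarith) hβ0
        _ = β := one_mul β
    have h2 : Real.sqrt (α * b) ≤ Real.sqrt α := by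
      refine Real.sqrt_le_sqrt ?_
      calc α * b ≤ α * 1 := mul_le_mul_of_nonneg_left (by linarith) hα0
        _ = α := mul_one α
    linarith
  have hFid : Fid ρ σ = τ ^ 2 := rfl
  have hsq : (τ ^ n) ^ 2 ≤ (Real.sqrt α + Real.sqrt β) ^ 2 := by
    refine pow_le_pow_left₀ (pow_nonneg hτ0 n) hchain 2
  have hsa := Real.sq_sqrt hα0
  have hsb := Real.sq_sqrt hβ0
  have hfinal : p * q * ((Real.sqrt α + Real.sqrt β) ^ 2) ≤ p * α + q * β := by
    have hq1 : q = 1 - p := by linarith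
    subst hq1
    nlinarith [sq_nonneg (p * Real.sqrt α - (1 - p) * Real.sqrt β), hsa, hsb]
  calc p * q * (Fid ρ σ) ^ n = p * q * ((τ ^ n) ^ 2) := by
        rw [hFid, ← pow_mul, ← pow_mul, Nat.mul_comm]
    _ ≤ p * q * ((Real.sqrt α + Real.sqrt β) ^ 2) := by
        refine mul_le_mul_of_nonneg_left hsq (by positivity)
    _ ≤ p * α + q * β := hfinal

/-- The real part of the trace is at most the trace norm. -/
lemma re_trace_le_traceNorm (M : Matrix ι ι ℂ) : (M.trace).re ≤ traceNorm M := by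
  have hC : (Mᴴ * M).PosSemidef := Matrix.posSemidef_conjTranspose_mul_self M
  set h : (Mᴴ * M).IsHermitian := hC.1 with hhdef
  set U : Matrix ι ι ℂ := (h.eigenvectorUnitary : Matrix ι ι ℂ) with hUdef
  have htr : M.trace = (star U * M * U).trace := by
    rw [Matrix.trace_mul_comm, ← Matrix.mul_assoc, mul_self_starU h, Matrix.one_mul]
  rw [htr, traceNorm_eq_sum_sqrt M]
  rw [show (star U * M * U).trace = ∑ i, (star U * M * U) i i from rfl, Complex.re_sum]
  refine Finset.sum_le_sum fun i _ => ?_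
  rw [entry_eq_dot']
  refine le_trans (re_dot_le_cnorm _ _) ?_
  have h1 : cnorm (fun a => U a i) = 1 := by
    rw [cnorm, col_orthonormal h i i, if_pos rfl, Complex.one_re, Real.sqrt_one]
  have h2 : cnorm (M *ᵥ (fun a => U a i)) = Real.sqrt (h.eigenvalues i) := by
    rw [cnorm, ← star_dot_mulVec M M _ _, dot_eigen h i i, if_pos rfl, Complex.ofReal_re]
  rw [h1, h2, one_mul]

/-- overlap strictly below one for distinct states -/
lemma t_lt_one {ρ σ : Matrix ι ι ℂ} (hρ : IsState ρ) (hσ : IsState σ) (hne : ρ ≠ σ) :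
    ((matSqrt ρ * matSqrt σ).trace).re < 1 := by
  have hmρ := matSqrt_hermitian hρ.1
  have hmσ := matSqrt_hermitian hσ.1
  set H : Matrix ι ι ℂ := matSqrt ρ - matSqrt σ with hHdef
  have hH : H.IsHermitian := hmρ.sub hmσ
  have hHH : H * H = matFun hH (fun x => x * x) := by
    have h1 := matFun_mul_matFun hH (fun x => x) (fun x => x)
    rwa [matFun_id hH] at h1
  have htr2 : ((H * H).trace).re
      = 2 - 2 * ((matSqrt ρ * matSqrt σ).trace).re := by
    have e : H * H = (matSqrt ρ * matSqrt ρ + matSqrt σ * matSqrt σ)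
        - (matSqrt ρ * matSqrt σ + matSqrt σ * matSqrt ρ) := by
      rw [hHdef]; noncomm_ring
    rw [e, matSqrt_mul_self hρ.1, matSqrt_mul_self hσ.1, Matrix.trace_sub, Matrix.trace_add,
      Matrix.trace_add, Matrix.trace_mul_comm (matSqrt σ) (matSqrt ρ), hρ.2, hσ.2,
      Complex.sub_re, Complex.add_re, Complex.add_re, Complex.one_re]
    ring
  by_contra hcon
  push_neg at hcon
  have hsum : ∑ i, (hH.eigenvalues i) * (hH.eigenvalues i) ≤ 0 := by
    have e1 : ((H * H).trace).re = ∑ i, (hH.eigenvalues i) * (hH.eigenvalues i) := by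
      rw [hHH, trace_matFun, Complex.re_sum]
      simp
    linarith [htr2, e1.symm.le]
  have hzero : ∀ i, hH.eigenvalues i = 0 := by
    intro i
    have h0 := (Finset.sum_eq_zero_iff_of_nonneg
      (fun i _ => mul_self_nonneg (hH.eigenvalues i))).mp
      (le_antisymm hsum (Finset.sum_nonneg fun i _ => mul_self_nonneg _)) i (Finset.mem_univ i)
    exact (mul_self_eq_zero).mp h0
  have hH0 : H = 0 := by
    have h1 : matFun hH (fun x => x) = matFun hH (fun _ => 0) :=
      matFun_congr hH fun i => by rw [hzero i]
    rw [← matFun_id hH, h1, matFun_zero]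
  have : matSqrt ρ = matSqrt σ := by
    have := sub_eq_zero.mp (hHdef ▸ hH0)
    exact this
  exact hne (by rw [← matSqrt_mul_self hρ.1, this, matSqrt_mul_self hσ.1])

/-- overlap strictly positive when `ρσ ≠ 0` -/
lemma t_pos {ρ σ : Matrix ι ι ℂ} (hρ : IsState ρ) (hσ : IsState σ) (hnorth : ρ * σ ≠ 0) :
    0 < ((matSqrt ρ * matSqrt σ).trace).re := by
  have hmρ := matSqrt_posSemidef hρ.1
  have hmσ := matSqrt_posSemidef hσ.1
  rcases lt_or_eq_of_le (psd_mul_psd_trace_re_nonneg hmρ hmσ) with h | h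
  · exact h
  exfalso
  have htr0 : ((matSqrt ρ * matSqrt σ).trace) = 0 := by
    rw [herm_mul_trace_real hmρ.1 hmσ.1, ← h, Complex.ofReal_zero]
  set r4 := matSqrt (matSqrt ρ) with hr4
  set s4 := matSqrt (matSqrt σ) with hs4
  have hr4h := matSqrt_hermitian hmρ
  have hs4h := matSqrt_hermitian hmσ
  have e1 : (matSqrt ρ * matSqrt σ).trace = (s4 * matSqrt ρ * s4).trace := by
    rw [← matSqrt_mul_self hmσ, ← hs4, ← Matrix.mul_assoc, Matrix.trace_mul_comm,
      ← Matrix.mul_assoc]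
  have hX1psd : (s4 * matSqrt ρ * s4).PosSemidef := by
    have := hmρ.conjTranspose_mul_mul_same (B := s4)
    rwa [hs4h.eq] at this
  have hX1 : s4 * matSqrt ρ * s4 = 0 := psd_trace_zero hX1psd (by rw [← e1, htr0])
  have e2 : (r4 * s4)ᴴ * (r4 * s4) = s4 * matSqrt ρ * s4 := by
    rw [Matrix.conjTranspose_mul, hr4h.eq, hs4h.eq]
    calc s4 * r4 * (r4 * s4) = s4 * (r4 * r4) * s4 := by noncomm_ring
      _ = s4 * matSqrt ρ * s4 := by rw [hr4, matSqrt_mul_self hmρ]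
  have hrs : r4 * s4 = 0 := by
    refine trace_conj_mul_self_zero ?_
    rw [e2, hX1, Matrix.trace_zero]
  have hms : matSqrt ρ * matSqrt σ = 0 := by
    rw [← matSqrt_mul_self hmρ, ← matSqrt_mul_self hmσ, ← hr4, ← hs4]
    calc r4 * r4 * (s4 * s4) = r4 * (r4 * s4) * s4 := by noncomm_ring
      _ = 0 := by rw [hrs, Matrix.mul_zero, Matrix.zero_mul]
  apply hnorth
  rw [← matSqrt_mul_self hρ.1, ← matSqrt_mul_self hσ.1]
  calc matSqrt ρ * matSqrt ρ * (matSqrt σ * matSqrt σ)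
      = matSqrt ρ * (matSqrt ρ * matSqrt σ) * matSqrt σ := by noncomm_ring
    _ = 0 := by rw [hms, Matrix.mul_zero, Matrix.zero_mul]


/-- **Two-sided fidelity characterization** of the sample complexity of
symmetric binary quantum hypothesis testing, in terms of the Holevo fidelity
and of the fidelity. -/
theorem sample_complexity_fidelity_bounds {d : ℕ} (ρ σ : Matrix (Fin d) (Fin d) ℂ)
    (hρ : IsState ρ) (hσ : IsState σ) (hne : ρ ≠ σ) (hnorth : ρ * σ ≠ 0)
    (p q ε : ℝ) (hp : p ∈ Set.Ioo (0 : ℝ) 1) (hq : q = 1 - p)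
    (hε : ε ∈ Set.Ioo 0 (min p q)) :
    (Real.log (p * q / ε) / (-Real.log (FidH ρ σ)) ≤ (sampleComplexity p ρ q σ ε : ℝ) ∧
      (sampleComplexity p ρ q σ ε : ℤ)
        ≤ ⌈Real.log (Real.sqrt (p * q) / ε) / (-(1 / 2) * Real.log (FidH ρ σ))⌉) ∧
    (Real.log (p * q / ε) / (-Real.log (Fid ρ σ)) ≤ (sampleComplexity p ρ q σ ε : ℝ) ∧
      (sampleComplexity p ρ q σ ε : ℤ)
        ≤ ⌈Real.log (Real.sqrt (p * q) / ε) / (-(1 / 2) * Real.log (Fid ρ σ))⌉) := by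
  obtain ⟨hp0, hp1⟩ := hp
  have hq0 : 0 < q := by rw [hq]; linarith
  have hq1 : q < 1 := by rw [hq]; linarith
  have hpq1 : p + q = 1 := by rw [hq]; ring
  obtain ⟨hε0, hεm⟩ := hε
  have hεp : ε < p := lt_of_lt_of_le hεm (min_le_left _ _)
  have hεq : ε < q := lt_of_lt_of_le hεm (min_le_right _ _)
  set t : ℝ := ((matSqrt ρ * matSqrt σ).trace).re with htdef
  set τ : ℝ := traceNorm (matSqrt ρ * matSqrt σ) with hτdef
  have ht0 : 0 < t := t_pos hρ hσ hnorth
  have ht1 : t < 1 := t_lt_one hρ hσ hne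
  have htτ : t ≤ τ := re_trace_le_traceNorm _
  have hτ0 : 0 < τ := lt_of_lt_of_le ht0 htτ
  have hFH : FidH ρ σ = t ^ 2 := rfl
  have hF : Fid ρ σ = τ ^ 2 := rfl
  -- τ < 1
  have hτ1 : τ < 1 := by
    by_contra hcon
    push_neg at hcon
    obtain ⟨m, hm⟩ := exists_pow_lt_of_lt_one (by norm_num : (0:ℝ) < 1/2) ht1
    have h1 := le_trans (pErr_ge_fid hρ hσ (by norm_num : (0:ℝ) ≤ 1/2)
      (by norm_num : (0:ℝ) ≤ 1/2) (by norm_num) m)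
      (pErr_le_holevo hρ hσ (by norm_num : (0:ℝ) ≤ 1/2) (by norm_num : (0:ℝ) ≤ 1/2) m)
    rw [hF] at h1
    have h2 : (1:ℝ) ≤ (τ ^ 2) ^ m := one_le_pow₀ (by nlinarith)
    have h3 : Real.sqrt ((1:ℝ)/2 * (1/2)) = 1/2 := by
      rw [show (1:ℝ)/2 * (1/2) = (1/2)^2 by ring, Real.sqrt_sq (by norm_num)]
    rw [h3] at h1
    nlinarith [pow_nonneg ht0.le m]
  -- logarithm facts
  have hlogt : Real.log t < 0 := Real.log_neg ht0 ht1
  have hlogτ : Real.log τ < 0 := Real.log_neg hτ0 hτ1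
  have hltτ : Real.log t ≤ Real.log τ := Real.log_le_log ht0 htτ
  have hpq0 : 0 < p * q := mul_pos hp0 hq0
  have hsqrtpq : ε < Real.sqrt (p * q) := by
    have h1 : min p q ≤ Real.sqrt (p * q) := by
      have h2 : (min p q) ^ 2 ≤ p * q := by
        have h3 := min_le_left p q
        have h4 := min_le_right p q
        nlinarith [le_min hp0.le hq0.le]
      calc min p q = Real.sqrt ((min p q) ^ 2) := (Real.sqrt_sq (le_min hp0.le hq0.le)).symm
        _ ≤ Real.sqrt (p * q) := Real.sqrt_le_sqrt h2
    exact lt_of_lt_of_le hεm h1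
  have hnum : 0 < Real.log (Real.sqrt (p * q) / ε) :=
    Real.log_pos (by rw [lt_div_iff₀ hε0]; simpa using hsqrtpq)
  have hdenH : -(1 / 2) * Real.log (FidH ρ σ) = - Real.log t := by
    rw [hFH, Real.log_pow]
    push_cast; ring
  have hdenF : -(1 / 2) * Real.log (Fid ρ σ) = - Real.log τ := by
    rw [hF, Real.log_pow]
    push_cast; ring
  set LH : ℝ := Real.log (Real.sqrt (p * q) / ε) / (-(1 / 2) * Real.log (FidH ρ σ)) with hLH
  set LF : ℝ := Real.log (Real.sqrt (p * q) / ε) / (-(1 / 2) * Real.log (Fid ρ σ)) with hLF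
  have hLHpos : 0 < LH := by
    rw [hLH, hdenH]; exact div_pos hnum (by linarith)
  have hLHF : LH ≤ LF := by
    rw [hLH, hLF, hdenH, hdenF]
    exact div_le_div_of_nonneg_left hnum.le (by linarith) (by linarith)
  -- the candidate sample size
  set N : ℕ := ⌈LH⌉₊ with hN
  have hN1 : 1 ≤ N := Nat.one_le_iff_ne_zero.mpr (by
    have := Nat.ceil_pos.mpr hLHpos
    omega)
  have hNmem : N ∈ { n : ℕ | 1 ≤ n ∧ pErr p ρ q σ n ≤ ε } := by
    refine ⟨hN1, ?_⟩
    refine le_trans (pErr_le_holevo hρ hσ hp0.le hq0.le N) ?_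
    have hstep : t ^ N ≤ ε / Real.sqrt (p * q) := by
      have h1 : LH ≤ (N : ℝ) := Nat.le_ceil LH
      rw [hLH, hdenH, div_le_iff₀ (by linarith)] at h1
      have h2 : Real.log (t ^ N) ≤ Real.log (ε / Real.sqrt (p * q)) := by
        rw [Real.log_pow, Real.log_div (ne_of_gt hε0)
          (ne_of_gt (Real.sqrt_pos.mpr hpq0))]
        have h3 : Real.log (Real.sqrt (p * q) / ε)
            = Real.log (Real.sqrt (p * q)) - Real.log ε :=
          Real.log_div (ne_of_gt (Real.sqrt_pos.mpr hpq0)) (ne_of_gt hε0)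
        rw [h3] at h1
        nlinarith [h1]
      have h3 : (0:ℝ) < t ^ N := pow_pos ht0 N
      exact (Real.log_le_log_iff h3 (by positivity)).mp h2
    calc Real.sqrt (p * q) * t ^ N ≤ Real.sqrt (p * q) * (ε / Real.sqrt (p * q)) := by
          refine mul_le_mul_of_nonneg_left hstep (Real.sqrt_nonneg _)
      _ = ε := by field_simp
  have hSS : (sampleComplexity p ρ q σ ε) ∈ { n : ℕ | 1 ≤ n ∧ pErr p ρ q σ n ≤ ε } := by
    rw [sampleComplexity]
    exact Nat.sInf_mem ⟨N, hNmem⟩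
  obtain ⟨hns1, hnserr⟩ := hSS
  set ns : ℕ := sampleComplexity p ρ q σ ε with hnsdef
  have hnsleN : ns ≤ N := Nat.sInf_le hNmem
  -- the generic lower bound computation
  have lower : ∀ G : ℝ, 0 < G → G < 1 → p * q * G ^ ns ≤ ε →
      Real.log (p * q / ε) / (- Real.log G) ≤ (ns : ℝ) := by
    intro G hG0 hG1 hGle
    have hlogG : Real.log G < 0 := Real.log_neg hG0 hG1
    rw [div_le_iff₀ (by linarith)]
    have h1 : Real.log (p * q * G ^ ns) ≤ Real.log ε :=
      Real.log_le_log (by positivity) hGle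
    rw [Real.log_mul (ne_of_gt hpq0) (ne_of_gt (pow_pos hG0 ns)), Real.log_pow] at h1
    rw [Real.log_div (ne_of_gt hpq0) (ne_of_gt hε0)]
    nlinarith [h1]
  have hFlt1 : Fid ρ σ < 1 := by rw [hF]; nlinarith
  have hF0 : 0 < Fid ρ σ := by rw [hF]; positivity
  have hFH0 : 0 < FidH ρ σ := by rw [hFH]; positivity
  have hFH1 : FidH ρ σ < 1 := by rw [hFH]; nlinarith
  have hFHleF : FidH ρ σ ≤ Fid ρ σ := by
    rw [hF, hFH]
    nlinarith
  have hFle : p * q * (Fid ρ σ) ^ ns ≤ ε := le_trans (pErr_ge_fid hρ hσ hp0.le hq0.le hpq1 ns)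
    hnserr
  have hFHle : p * q * (FidH ρ σ) ^ ns ≤ ε := by
    refine le_trans ?_ hFle
    refine mul_le_mul_of_nonneg_left (pow_le_pow_left₀ hFH0.le hFHleF ns) hpq0.le
  -- upper bounds as integers
  have hupperH : (ns : ℤ) ≤ ⌈LH⌉ := by
    have h1 : (N : ℤ) = ⌈LH⌉ := by
      rw [hN, ← Int.ceil_toNat (α := ℝ) LH, Int.toNat_of_nonneg (Int.ceil_nonneg hLHpos.le)]
    calc (ns : ℤ) ≤ (N : ℤ) := by exact_mod_cast hnsleN
      _ = ⌈LH⌉ := h1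
  refine ⟨⟨lower (FidH ρ σ) hFH0 hFH1 hFHle, hupperH⟩,
    ⟨lower (Fid ρ σ) hF0 hFlt1 hFle, le_trans hupperH (Int.ceil_le_ceil hLHF)⟩⟩

end QHT

end
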